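/- If the KNV machine reaches a final configuration (unloading by rule 14: ⟨N, 0, •⟩_norm ↦ N) from the initial configuration of a term T, then N is in strong normal form and T reduces to N by a (possibly empty) sequence of rrCbV reduction steps. -/

import Mathlib

set_option autoImplicit true

/-- Lambda terms with de Bruijn indices. -/
inductive Tm : Type
  | var : Nat → Tm
  | app : Tm → Tm → Tm
  | lam : Tm → Tm
  deriving DecidableEq, Repr

/-- Shifting `T↑ᵏᵢ`: add `i` to all indices `≥ k`. -/
def shiftTm (i : Nat) : Nat → Tm → Tm
  | k, .var n => if n ≥ k then .var (n + i) else .var n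
  | k, .app t1 t2 => .app (shiftTm i k t1) (shiftTm i k t2)
  | k, .lam t => .lam (shiftTm i (k + 1) t)

/-- Substitution `T⟨i←T'⟩`. -/
def substTm (t' : Tm) : Nat → Tm → Tm
  | i, .var n => if n < i then .var n else if n = i then shiftTm i 0 t' else .var (n - 1)
  | i, .app t1 t2 => .app (substTm t' i t1) (substTm t' i t2)
  | i, .lam t => .lam (substTm t' (i + 1) t)

/-- `ClosedUnder k t`: all free de Bruijn indices of `t` are `< k`. -/
def ClosedUnder : Nat → Tm → Prop
  | k, .var n => n < k
  | k, .app t u => ClosedUnder k t ∧ ClosedUnder k u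
  | k, .lam t => ClosedUnder (k + 1) t

def sizeTm : Tm → Nat
  | .var _ => 1
  | .app t u => 1 + sizeTm t + sizeTm u
  | .lam t => 1 + sizeTm t

mutual
  /-- Strong normal forms: N ::= Lam N | a. -/
  inductive IsNf : Tm → Prop
    | lam : IsNf t → IsNf (Tm.lam t)
    | ne : IsNe t → IsNf t
  /-- Neutral terms: a ::= Var n | App a N. -/
  inductive IsNe : Tm → Prop
    | var : IsNe (Tm.var n)
    | app : IsNe t → IsNf u → IsNe (Tm.app t u)
end

mutual
  /-- Weak normal forms (fireball): w ::= Lam T | i. -/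
  inductive IsWnf : Tm → Prop
    | lam : IsWnf (Tm.lam t)
    | inert : IsInert t → IsWnf t
  /-- Inert terms: i ::= Var n | App i w. -/
  inductive IsInert : Tm → Prop
    | var : IsInert (Tm.var n)
    | app : IsInert t → IsWnf u → IsInert (Tm.app t u)
end

/-- One-hole contexts (outside-in representation as a tree). -/
inductive Ctx : Type
  | hole : Ctx
  | appL : Ctx → Tm → Ctx   -- App C t : hole in the function position
  | appR : Tm → Ctx → Ctx   -- App t C : hole in the argument position
  | lamC : Ctx → Ctx
  deriving DecidableEq

def plugC : Ctx → Tm → Tm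
  | .hole, t => t
  | .appL c u, t => .app (plugC c t) u
  | .appR u c, t => .app u (plugC c t)
  | .lamC c, t => .lam (plugC c t)

/-- Weak right-to-left CbV contexts: F ::= □ | App F w | App T F. -/
inductive IsFc : Ctx → Prop
  | hole : IsFc .hole
  | appL : IsFc c → IsWnf w → IsFc (.appL c w)
  | appR : IsFc c → IsFc (.appR t c)

mutual
  /-- H ::= App H N | App i R. -/
  inductive IsHc : Ctx → Prop
    | appL : IsHc c → IsNf n → IsHc (.appL c n)
    | appR : IsInert i → IsRc c → IsHc (.appR i c)
  /-- rrCbV contexts: R ::= Lam R | H | F. -/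
  inductive IsRc : Ctx → Prop
    | lam : IsRc c → IsRc (.lamC c)
    | h : IsHc c → IsRc c
    | f : IsFc c → IsRc c
end

/-- βwnf-reduction in a weak right-to-left CbV context. -/
def RedF (t t' : Tm) : Prop :=
  ∃ c b w, IsFc c ∧ IsWnf w ∧
    t = plugC c (.app (.lam b) w) ∧ t' = plugC c (substTm w 0 b)

/-- One-step rrCbV reduction: βwnf-contraction in an rrCbV context. -/
def RedR (t t' : Tm) : Prop :=
  ∃ c b w, IsRc c ∧ IsWnf w ∧
    t = plugC c (.app (.lam b) w) ∧ t' = plugC c (substTm w 0 b)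

/-- Full β-reduction (one step, anywhere). -/
inductive Beta : Tm → Tm → Prop
  | beta : Beta (.app (.lam t) u) (substTm u 0 t)
  | appL : Beta t t' → Beta (.app t u) (.app t' u)
  | appR : Beta u u' → Beta (.app t u) (.app t u')
  | lam : Beta t t' → Beta (.lam t) (.lam t')

mutual
  /-- Machine weak normal forms: W ::= ⟨Lam T, E⟩ | I. -/
  inductive MW : Type
    | clos : Tm → MEnv → MW
    | inert : MI → MW
  /-- Machine inert terms: I ::= V(n) | App I W. -/
  inductive MI : Type
    | avar : Nat → MI
    | mapp : MI → MW → MI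
  /-- Environments: lists of machine wnfs. -/
  inductive MEnv : Type
    | nil : MEnv
    | cons : MW → MEnv → MEnv
end

def lookupEnv : MEnv → Nat → Option MW
  | .nil, _ => none
  | .cons w _, 0 => some w
  | .cons _ e, n + 1 => lookupEnv e n

/-- Stack frames of the KNV machine. -/
inductive Frame : Type
  | closF : Tm → MEnv → Frame  -- (T,E)□
  | argW : MW → Frame          -- □W
  | nfArg : Tm → Frame         -- N□ : App □ N with N a strong nf
  | lamF : Frame               -- λ□
  | inertF : MI → Frame        -- I□ : App I □

/-- Configurations of the KNV machine. -/
inductive Conf : Type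
  | eval : Tm → MEnv → List Frame → Nat → Conf
  | apply : MW → List Frame → Nat → Conf
  | norm : Tm → Nat → List Frame → Conf

/-- Side condition for rules 8–10: the top of the stack is not `(T,E)□` nor `□W`. -/
def notElim : List Frame → Prop
  | Frame.closF _ _ :: _ => False
  | Frame.argW _ :: _ => False
  | _ => True

/-- The 13 transition rules of the KNV machine (Figure 3). -/
inductive Step : Conf → Conf → Prop
  | r1 : Step (.eval (.app t1 t2) e s m) (.eval t2 e (.closF t1 e :: s) m)
  | r2 : Step (.eval (.lam t) e s m) (.apply (.clos t e) s m)
  | r3 : Step (.eval (.var 0) (.cons w e) s m) (.apply w s m)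
  | r4 : Step (.eval (.var (n + 1)) (.cons w e) s m) (.eval (.var n) e s m)
  | r5 : Step (.apply w (.closF t e :: s) m) (.eval t e (.argW w :: s) m)
  | r6 : Step (.apply (.clos t e) (.argW w :: s) m) (.eval t (.cons w e) s m)
  | r7 : Step (.apply (.inert i) (.argW w :: s) m) (.apply (.inert (.mapp i w)) s m)
  | r8 : notElim s →
      Step (.apply (.clos t e) s m)
        (.eval t (.cons (.inert (.avar (m + 1))) e) (.lamF :: s) (m + 1))
  | r9 : notElim s → Step (.apply (.inert (.mapp i w)) s m) (.apply w (.inertF i :: s) m)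
  | r10 : notElim s → Step (.apply (.inert (.avar n)) s m) (.norm (.var (m - n)) m s)
  | r11 : Step (.norm t m (.inertF i :: s)) (.apply (.inert i) (.nfArg t :: s) m)
  | r12 : Step (.norm t m (.lamF :: s)) (.norm (.lam t) (m - 1) s)
  | r13 : Step (.norm a m (.nfArg t :: s)) (.norm (.app a t) m s)

/-- KNV transitions without the β-contraction rule (6). -/
inductive StepNB : Conf → Conf → Prop
  | r1 : StepNB (.eval (.app t1 t2) e s m) (.eval t2 e (.closF t1 e :: s) m)
  | r2 : StepNB (.eval (.lam t) e s m) (.apply (.clos t e) s m)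
  | r3 : StepNB (.eval (.var 0) (.cons w e) s m) (.apply w s m)
  | r4 : StepNB (.eval (.var (n + 1)) (.cons w e) s m) (.eval (.var n) e s m)
  | r5 : StepNB (.apply w (.closF t e :: s) m) (.eval t e (.argW w :: s) m)
  | r7 : StepNB (.apply (.inert i) (.argW w :: s) m) (.apply (.inert (.mapp i w)) s m)
  | r8 : notElim s →
      StepNB (.apply (.clos t e) s m)
        (.eval t (.cons (.inert (.avar (m + 1))) e) (.lamF :: s) (m + 1))
  | r9 : notElim s → StepNB (.apply (.inert (.mapp i w)) s m) (.apply w (.inertF i :: s) m)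
  | r10 : notElim s → StepNB (.apply (.inert (.avar n)) s m) (.norm (.var (m - n)) m s)
  | r11 : StepNB (.norm t m (.inertF i :: s)) (.apply (.inert i) (.nfArg t :: s) m)
  | r12 : StepNB (.norm t m (.lamF :: s)) (.norm (.lam t) (m - 1) s)
  | r13 : StepNB (.norm a m (.nfArg t :: s)) (.norm (.app a t) m s)

mutual
  /-- Stack shape grammar: S1. -/
  inductive WS1 : List Frame → Prop
    | closF : WS1 s → WS1 (.closF t e :: s)
    | argW : WS1 s → WS1 (.argW w :: s)
    | s3 : WS3 s → WS1 s
  /-- Stack shape grammar: S2. -/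
  inductive WS2 : List Frame → Prop
    | nfArg : IsNf t → WS2 s → WS2 (.nfArg t :: s)
    | s3 : WS3 s → WS2 s
  /-- Stack shape grammar: S3. -/
  inductive WS3 : List Frame → Prop
    | nil : WS3 []
    | lamF : WS3 s → WS3 (.lamF :: s)
    | inertF : WS2 s → WS3 (.inertF i :: s)
end

/-- Well-formed configurations. -/
inductive WFConf : Conf → Prop
  | eval : WS1 s → WFConf (.eval t e s m)
  | applyW : WS1 s → WFConf (.apply w s m)
  | applyI : WS2 s → WFConf (.apply (.inert i) s m)
  | normNe : IsNe a → WS2 s → WFConf (.norm a m s)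
  | normNf : IsNf n → WS3 s → WFConf (.norm n m s)

mutual
  /-- Decoding of machine weak normal forms at a de Bruijn level. -/
  inductive DecW : MW → Nat → Tm → Prop
    | clos : DecT t e m 1 b → DecW (.clos t e) m (.lam b)
    | inert : DecI i m t → DecW (.inert i) m t
  /-- Decoding of machine inert terms at a de Bruijn level. -/
  inductive DecI : MI → Nat → Tm → Prop
    | avar : DecI (.avar n) m (.var (m - n))
    | mapp : DecI i m t1 → DecW w m t2 → DecI (.mapp i w) m (.app t1 t2)
  /-- Decoding of a term in an environment at level `m` and binder depth `d`
      (simultaneous substitution of decoded environment entries). -/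
  inductive DecT : Tm → MEnv → Nat → Nat → Tm → Prop
    | varLt : n < d → DecT (.var n) e m d (.var n)
    | varEnv : d ≤ n → lookupEnv e (n - d) = some w → DecW w m t →
        DecT (.var n) e m d (shiftTm d 0 t)
    | varFree : d ≤ n → lookupEnv e (n - d) = none → DecT (.var n) e m d (.var n)
    | app : DecT t1 e m d u1 → DecT t2 e m d u2 →
        DecT (.app t1 t2) e m d (.app u1 u2)
    | lam : DecT t e m (d + 1) b → DecT (.lam t) e m d (.lam b)
end

/-- Annotated terms and frames. -/
inductive Ann : Type
  | tm : Tm → Ann     -- T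
  | tmW : Tm → Ann    -- Tᵂ
  | tmN : Tm → Ann    -- Tᴺ
  | funL : Tm → Ann   -- T□ : App T □
  | argR : Tm → Ann   -- □T : App □ T
  | funLW : Tm → Ann  -- (I□)ᵂ : App I □
  | argRN : Tm → Ann  -- (N□)ᴺ : App □ N
  | lamF : Ann        -- λ□
  deriving DecidableEq

def rankAnn : Ann → Nat
  | .tm _ => 0
  | .funL _ => 1
  | .argR _ => 2
  | .tmW _ => 3
  | .funLW _ => 4
  | .argRN _ => 5
  | .lamF => 6
  | .tmN _ => 7

/-- The strict order on annotated terms/frames from the paper. -/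
def AnnLt (a b : Ann) : Prop := rankAnn a < rankAnn b

/-- Reversed lexicographic extension of `AnnLt` to lists. -/
def RLex (l1 l2 : List Ann) : Prop := List.Lex AnnLt l1.reverse l2.reverse

def plugA : Ann → Tm → Tm
  | .funL t, u => .app t u
  | .argR t, u => .app u t
  | .funLW t, u => .app t u
  | .argRN t, u => .app u t
  | .lamF, u => .lam u
  | .tm t, _ => t
  | .tmW t, _ => t
  | .tmN t, _ => t

/-- Plugging an annotated decomposition (head must be an annotated term). -/
def plugD : List Ann → Option Tm
  | [] => none
  | a :: l =>
    match a with
    | .tm t => some (l.foldl (fun u f => plugA f u) t)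
    | .tmW t => some (l.foldl (fun u f => plugA f u) t)
    | .tmN t => some (l.foldl (fun u f => plugA f u) t)
    | _ => none

/-- Decoding of stacks to lists of annotated frames; the `Nat` is the number
    of λ□ frames in the stack (the current de Bruijn level). -/
inductive DecS : List Frame → Nat → List Ann → Prop
  | nil : DecS [] 0 []
  | closF : DecT t e m 0 t' → DecS s m l → DecS (.closF t e :: s) m (.funL t' :: l)
  | argW : DecW w m t' → DecS s m l → DecS (.argW w :: s) m (.argR t' :: l)
  | nfArg : DecS s m l → DecS (.nfArg t :: s) m (.argRN t :: l)
  | lamF : DecS s m l → DecS (.lamF :: s) (m + 1) (.lamF :: l)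
  | inertF : DecI i m t' → DecS s m l → DecS (.inertF i :: s) m (.funLW t' :: l)

/-- Decoding of configurations to annotated decompositions. -/
inductive DecConf : Conf → List Ann → Prop
  | eval : DecT t e m 0 t' → DecS s m l → DecConf (.eval t e s m) (.tm t' :: l)
  | apply : DecW w m t' → DecS s m l → DecConf (.apply w s m) (.tmW t' :: l)
  | norm : DecS s m l → DecConf (.norm t m s) (.tmN t :: l)

/-- Frames over plain lambda terms (for the context grammars of Figure 5). -/
inductive Fr : Type
  | funL : Tm → Fr  -- flapp T : App T □
  | argR : Tm → Fr  -- frapp T : App □ T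
  | lamF : Fr       -- λ□
  deriving DecidableEq

mutual
  /-- Inside-out grammar: S1. -/
  inductive IoS1 : List Fr → Prop
    | funL : IoS1 s → IoS1 (.funL t :: s)
    | argR : IsWnf w → IoS1 s → IoS1 (.argR w :: s)
    | s3 : IoS3 s → IoS1 s
  /-- Inside-out grammar: S2. -/
  inductive IoS2 : List Fr → Prop
    | argR : IsNf n → IoS2 s → IoS2 (.argR n :: s)
    | s3 : IoS3 s → IoS2 s
  /-- Inside-out grammar: S3. -/
  inductive IoS3 : List Fr → Prop
    | nil : IoS3 []
    | lamF : IoS3 s → IoS3 (.lamF :: s)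
    | funL : IsInert i → IoS2 s → IoS3 (.funL i :: s)
end

mutual
  /-- Outside-in grammar: F. -/
  inductive OiF : List Fr → Prop
    | nil : OiF []
    | argR : IsWnf w → OiF s → OiF (.argR w :: s)
    | funL : OiF s → OiF (.funL t :: s)
  /-- Outside-in grammar: H. -/
  inductive OiH : List Fr → Prop
    | argR : IsNf n → OiH s → OiH (.argR n :: s)
    | funL : IsInert i → OiR s → OiH (.funL i :: s)
  /-- Outside-in grammar: R. -/
  inductive OiR : List Fr → Prop
    | lamF : OiR s → OiR (.lamF :: s)
    | h : OiH s → OiR s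
    | f : OiF s → OiR s
end

def ITm : Tm := .lam (.var 0)
def KTm : Tm := .lam (.lam (.var 1))
def omegaSmall : Tm := .lam (.app (.var 0) (.var 0))
def OmegaTm : Tm := .app omegaSmall omegaSmall

def churchBody : Nat → Tm
  | 0 => .var 0
  | n + 1 => .app (.var 1) (churchBody n)

/-- The n-th Church numeral. -/
def church (n : Nat) : Tm := .lam (.lam (churchBody n))

/-- eₙ = Lam (App (App cₙ ω) 0). -/
def eTm (n : Nat) : Tm := .lam (.app (.app (church n) omegaSmall) (.var 0))


/-! ### Auxiliary development -/

/-- number of entries in an environment -/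
def envLen : MEnv → Nat
  | .nil => 0
  | .cons _ e => envLen e + 1

theorem lookup_none_ge : ∀ (e : MEnv) (k : Nat), lookupEnv e k = none → envLen e ≤ k
  | .nil, _, _ => Nat.zero_le _
  | .cons _ _, 0, h => by simp [lookupEnv] at h
  | .cons w e, k+1, h => by
      have := lookup_none_ge e k (by simpa [lookupEnv] using h)
      simp [envLen]; omega

mutual
def szW : MW → Nat
  | .clos t e => sizeTm t + szE e + 1
  | .inert i => szI i + 1
def szI : MI → Nat
  | .avar _ => 1
  | .mapp i w => szI i + szW w + 1
def szE : MEnv → Nat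
  | .nil => 1
  | .cons w e => szW w + szE e + 1
end

theorem lookup_sizeOf : ∀ (e : MEnv) (k : Nat) (w : MW), lookupEnv e k = some w →
    szW w < szE e
  | .nil, _, _, h => by simp [lookupEnv] at h
  | .cons w' e, 0, w, h => by
      simp [lookupEnv] at h; subst h; simp [szE]
  | .cons w' e, k+1, w, h => by
      have := lookup_sizeOf e k w (by simpa [lookupEnv] using h)
      simp [szE]; omega

mutual
/-- max de Bruijn level occurring in a machine wnf -/
def mxW : MW → Nat
  | .clos _ e => mxE e
  | .inert i => mxI i
def mxI : MI → Nat
  | .avar n => n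
  | .mapp i w => max (mxI i) (mxW w)
def mxE : MEnv → Nat
  | .nil => 0
  | .cons w e => max (mxW w) (mxE e)
end

theorem lookup_mx : ∀ (e : MEnv) (k : Nat) (w : MW), lookupEnv e k = some w →
    mxW w ≤ mxE e
  | .nil, _, _, h => by simp [lookupEnv] at h
  | .cons w' e, 0, w, h => by simp [lookupEnv] at h; subst h; simp [mxE]
  | .cons w' e, k+1, w, h => by
      have := lookup_mx e k w (by simpa [lookupEnv] using h)
      simp [mxE]; omega

mutual
/-- decoding of machine wnfs at level m -/
def decW : MW → Nat → Tm
  | .clos t e, m => .lam (decT t e m 1)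
  | .inert i, m => decI i m
termination_by w _ => (szW w, 0)
decreasing_by
  all_goals first
    | (apply Prod.Lex.left; first
        | (exact lookup_sizeOf _ _ _ h)
        | (simp [szW, szI, szE, sizeTm] <;> omega))
    | (apply Prod.Lex.right; simp [sizeTm] <;> omega)

def decI : MI → Nat → Tm
  | .avar n, m => .var (m - n)
  | .mapp i w, m => .app (decI i m) (decW w m)
termination_by i _ => (szI i, 0)
decreasing_by
  all_goals first
    | (apply Prod.Lex.left; first
        | (exact lookup_sizeOf _ _ _ h)
        | (simp [szW, szI, szE, sizeTm] <;> omega))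
    | (apply Prod.Lex.right; simp [sizeTm] <;> omega)

def decT : Tm → MEnv → Nat → Nat → Tm
  | .var n, e, m, d =>
    if n < d then .var n else
      match h : lookupEnv e (n - d) with
      | some w => shiftTm d 0 (decW w m)
      | none => .var (n - envLen e + m)
  | .app t1 t2, e, m, d => .app (decT t1 e m d) (decT t2 e m d)
  | .lam t, e, m, d => .lam (decT t e m (d + 1))
termination_by t e _ _ => (szE e, sizeTm t)
decreasing_by
  all_goals first
    | (apply Prod.Lex.left; first
        | (exact lookup_sizeOf _ _ _ h)
        | (simp [szW, szI, szE, sizeTm] <;> omega))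
    | (apply Prod.Lex.right; simp [sizeTm] <;> omega)
end

/-! ### shift/subst lemmas -/

theorem shift_zero (t : Tm) : ∀ k, shiftTm 0 k t = t := by
  induction t with
  | var n => intro k; unfold shiftTm; split <;> simp
  | app t1 t2 ih1 ih2 => intro k; simp [shiftTm, ih1, ih2]
  | lam t ih => intro k; simp [shiftTm, ih]

theorem shift_shift (a b : Nat) (t : Tm) : ∀ k c, k ≤ c → c ≤ b + k →
    shiftTm a c (shiftTm b k t) = shiftTm (a + b) k t := by
  induction t with
  | var n =>
    intro k c h1 h2
    by_cases h : n ≥ k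
    · simp [shiftTm, h]
      have : n + b ≥ c := by omega
      simp [shiftTm, this]; omega
    · simp [shiftTm, h]
      have : ¬ n ≥ c := by omega
      simp [shiftTm, h, this]
  | app t1 t2 ih1 ih2 => intro k c h1 h2; simp [shiftTm, ih1 _ _ h1 h2, ih2 _ _ h1 h2]
  | lam t ih =>
    intro k c h1 h2
    simp [shiftTm, ih (k+1) (c+1) (by omega) (by omega)]

theorem subst_shift (u t : Tm) (d : Nat) : ∀ k, substTm u (d + k) (shiftTm (d + 1) k t) = shiftTm d k t := by
  induction t with
  | var n =>
    intro k
    by_cases h : n ≥ k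
    · simp [shiftTm, h]
      have h1 : ¬ n + (d+1) < d + k := by omega
      have h2 : ¬ n + (d+1) = d + k := by omega
      simp [substTm, h1, h2]
    · simp [shiftTm, h]
      have h1 : n < d + k := by omega
      simp [substTm, h1]
  | app t1 t2 ih1 ih2 => intro k; simp [shiftTm, substTm, ih1, ih2]
  | lam t ih =>
    intro k
    have := ih (k+1)
    simp [shiftTm, substTm]
    rw [show d + k + 1 = d + (k+1) by omega]
    exact this

/-! ### decT computation lemmas -/

theorem decT_var_lt {n d : Nat} (e : MEnv) (m : Nat) (h : n < d) :
    decT (.var n) e m d = .var n := by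
  conv_lhs => rw [decT]
  simp [h]

theorem decT_var_some {n d : Nat} {e : MEnv} {w : MW} (m : Nat) (h : ¬ n < d)
    (hl : lookupEnv e (n - d) = some w) :
    decT (.var n) e m d = shiftTm d 0 (decW w m) := by
  conv_lhs => rw [decT]
  simp [h]; split <;> simp_all

theorem decT_var_none {n d : Nat} {e : MEnv} (m : Nat) (h : ¬ n < d)
    (hl : lookupEnv e (n - d) = none) :
    decT (.var n) e m d = .var (n - envLen e + m) := by
  conv_lhs => rw [decT]
  simp [h]; split <;> simp_all

theorem decT_app (t1 t2 : Tm) (e : MEnv) (m d : Nat) :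
    decT (.app t1 t2) e m d = .app (decT t1 e m d) (decT t2 e m d) := by
  conv_lhs => rw [decT]

theorem decT_lam (t : Tm) (e : MEnv) (m d : Nat) :
    decT (.lam t) e m d = .lam (decT t e m (d + 1)) := by
  conv_lhs => rw [decT]

theorem decT_nil (t : Tm) : ∀ d, decT t .nil 0 d = t := by
  induction t with
  | var n =>
    intro d
    by_cases h : n < d
    · exact decT_var_lt _ _ h
    · rw [decT_var_none 0 h (by simp [lookupEnv])]; simp [envLen]
  | app t1 t2 ih1 ih2 => intro d; rw [decT_app, ih1, ih2]
  | lam t ih => intro d; rw [decT_lam, ih]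

theorem decW_clos (t : Tm) (e : MEnv) (m : Nat) :
    decW (.clos t e) m = .lam (decT t e m 1) := by conv_lhs => rw [decW]

theorem decW_inert (i : MI) (m : Nat) : decW (.inert i) m = decI i m := by
  conv_lhs => rw [decW]

theorem decI_avar (n m : Nat) : decI (.avar n) m = .var (m - n) := by
  conv_lhs => rw [decI]

theorem decI_mapp (i : MI) (w : MW) (m : Nat) :
    decI (.mapp i w) m = .app (decI i m) (decW w m) := by
  conv_lhs => rw [decI]

/-! ### level-shift stability -/

mutual
theorem stabW : ∀ (w : MW) (m : Nat), mxW w ≤ m →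
    decW w (m + 1) = shiftTm 1 0 (decW w m)
  | .clos t e, m, h => by
    rw [decW_clos, decW_clos]
    have := stabT t e m 1 (by simpa [mxW] using h)
    simp [shiftTm, this]
  | .inert i, m, h => by
    rw [decW_inert, decW_inert]
    exact stabI i m (by simpa [mxW] using h)
termination_by w _ _ => (szW w, 0)
decreasing_by
  all_goals (apply Prod.Lex.left; simp [szW, szI, szE, sizeTm] <;> omega)

theorem stabI : ∀ (i : MI) (m : Nat), mxI i ≤ m →
    decI i (m + 1) = shiftTm 1 0 (decI i m)
  | .avar n, m, h => by
    rw [decI_avar, decI_avar]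
    have : n ≤ m := by simpa [mxI] using h
    simp [shiftTm]; omega
  | .mapp i w, m, h => by
    rw [decI_mapp, decI_mapp]
    simp [mxI] at h
    simp [shiftTm, stabI i m h.1, stabW w m h.2]
termination_by i _ _ => (szI i, 0)
decreasing_by
  all_goals (apply Prod.Lex.left; simp [szW, szI, szE, sizeTm] <;> omega)

theorem stabT : ∀ (t : Tm) (e : MEnv) (m : Nat) (d : Nat), mxE e ≤ m →
    decT t e (m + 1) d = shiftTm 1 d (decT t e m d)
  | .var n, e, m, d, h => by
    by_cases h1 : n < d
    · rw [decT_var_lt _ _ h1, decT_var_lt _ _ h1]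
      have h2 : ¬ d ≤ n := by omega
      simp [shiftTm, h2]
    · cases hl : lookupEnv e (n - d) with
      | some w =>
        rw [decT_var_some _ h1 hl, decT_var_some _ h1 hl]
        rw [stabW w m (le_trans (lookup_mx e _ w hl) h)]
        rw [shift_shift d 1 _ 0 0 (by omega) (by omega)]
        rw [shift_shift 1 d _ 0 d (by omega) (by omega)]
        rw [Nat.add_comm]
      | none =>
        rw [decT_var_none _ h1 hl, decT_var_none _ h1 hl]
        have h3 := lookup_none_ge e _ hl
        have h4 : d ≤ n - envLen e + m := by omega
        simp [shiftTm, h4]; omega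
  | .app t1 t2, e, m, d, h => by
    rw [decT_app, decT_app, stabT t1 e m d h, stabT t2 e m d h]
    simp [shiftTm]
  | .lam t, e, m, d, h => by
    rw [decT_lam, decT_lam, stabT t e m (d+1) h]
    simp [shiftTm]
termination_by t e _ _ _ => (szE e, sizeTm t)
decreasing_by
  all_goals first
    | (apply Prod.Lex.left; first
        | (exact lookup_sizeOf _ _ _ hl)
        | (simp [szW, szI, szE, sizeTm] <;> omega))
    | (apply Prod.Lex.right; simp [sizeTm] <;> omega)
end

/-! ### substitution lemma (rule 6) -/

theorem substDec (w : MW) (m : Nat) (t : Tm) : ∀ d (e : MEnv),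
    decT t (.cons w e) m d = substTm (decW w m) d (decT t e m (d + 1)) := by
  induction t with
  | var n =>
    intro d e
    by_cases h1 : n < d
    · rw [decT_var_lt _ _ h1, decT_var_lt _ _ (by omega : n < d + 1)]
      simp [substTm, h1]
    · by_cases h2 : n = d
      · subst h2
        rw [decT_var_some m h1 (by simp [lookupEnv] : lookupEnv (.cons w e) (n - n) = some w)]
        rw [decT_var_lt _ _ (by omega : n < n + 1)]
        simp [substTm]
      · have h3 : d < n := by omega
        have hc : lookupEnv (.cons w e) (n - d) = lookupEnv e (n - (d + 1)) := by
          have : n - d = (n - (d + 1)) + 1 := by omega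
          rw [this]; rfl
        cases hl : lookupEnv e (n - (d + 1)) with
        | some w' =>
          rw [decT_var_some m h1 (hc.trans hl), decT_var_some m (by omega) hl]
          have := subst_shift (decW w m) (decW w' m) d 0
          simpa using this.symm
        | none =>
          rw [decT_var_none m h1 (hc.trans hl), decT_var_none m (by omega) hl]
          have h4 := lookup_none_ge e _ hl
          have h5 : ¬ (n - envLen e + m < d) := by omega
          have h6 : ¬ (n - envLen e + m = d) := by omega
          simp [substTm, h5, h6, envLen]
          omega
  | app t1 t2 ih1 ih2 =>
    intro d e
    rw [decT_app, decT_app, ih1, ih2]; simp [substTm]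
  | lam t ih =>
    intro d e
    rw [decT_lam, decT_lam, ih]; simp [substTm]

/-! ### freshness lemma (rule 8) -/

theorem freshDec (e : MEnv) (m : Nat) (he : mxE e ≤ m) (t : Tm) : ∀ d,
    decT t (.cons (.inert (.avar (m + 1))) e) (m + 1) d = decT t e m (d + 1) := by
  induction t with
  | var n =>
    intro d
    by_cases h1 : n < d
    · rw [decT_var_lt _ _ h1, decT_var_lt _ _ (by omega)]
    · by_cases h2 : n = d
      · subst h2
        have hl0 : lookupEnv (MEnv.cons (MW.inert (MI.avar (m+1))) e) (n - n) =
            some (MW.inert (MI.avar (m+1))) := by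
          simp [Nat.sub_self, lookupEnv]
        rw [decT_var_some (m+1) h1 hl0]
        rw [decT_var_lt _ _ (by omega : n < n + 1)]
        rw [decW_inert, decI_avar]
        simp [Nat.sub_self, shiftTm]
      · have h3 : d < n := by omega
        have hc : lookupEnv (.cons (MW.inert (MI.avar (m+1))) e) (n - d) = lookupEnv e (n - (d + 1)) := by
          have : n - d = (n - (d + 1)) + 1 := by omega
          rw [this]; rfl
        cases hl : lookupEnv e (n - (d + 1)) with
        | some w' =>
          rw [decT_var_some (m+1) h1 (hc.trans hl), decT_var_some m (by omega) hl]
          rw [stabW w' m (le_trans (lookup_mx e _ w' hl) he)]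
          rw [shift_shift d 1 _ 0 0 (by omega) (by omega)]
        | none =>
          rw [decT_var_none (m+1) h1 (hc.trans hl), decT_var_none m (by omega) hl]
          have h4 := lookup_none_ge e _ hl
          have h5 : envLen e + d + 1 ≤ n := by omega
          simp [envLen]
          omega
  | app t1 t2 ih1 ih2 => intro d; rw [decT_app, decT_app, ih1, ih2]
  | lam t ih => intro d; rw [decT_lam, decT_lam, ih]

/-! ### context composition and stack decoding -/

def compC : Ctx → Ctx → Ctx
  | .hole, c => c
  | .appL c u, c' => .appL (compC c c') u
  | .appR u c, c' => .appR u (compC c c')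
  | .lamC c, c' => .lamC (compC c c')

theorem plug_comp (c c' : Ctx) (t : Tm) : plugC (compC c c') t = plugC c (plugC c' t) := by
  induction c with
  | hole => rfl
  | appL c u ih => simp [compC, plugC, ih]
  | appR u c ih => simp [compC, plugC, ih]
  | lamC c ih => simp [compC, plugC, ih]

theorem comp_hole (c : Ctx) : compC c .hole = c := by
  induction c with
  | hole => rfl
  | appL c u ih => simp [compC, ih]
  | appR u c ih => simp [compC, ih]
  | lamC c ih => simp [compC, ih]

/-- decoding of a stack to a context, at level `m` -/
def decSctx : List Frame → Nat → Ctx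
  | [], _ => .hole
  | .closF t e :: s, m => compC (decSctx s m) (.appR (decT t e m 0) .hole)
  | .argW w :: s, m => compC (decSctx s m) (.appL .hole (decW w m))
  | .nfArg t :: s, m => compC (decSctx s m) (.appL .hole t)
  | .lamF :: s, m => compC (decSctx s (m - 1)) (.lamC .hole)
  | .inertF i :: s, m => compC (decSctx s m) (.appR (decI i m) .hole)

/-- decoding of configurations -/
def decC : Conf → Tm
  | .eval t e s m => plugC (decSctx s m) (decT t e m 0)
  | .apply w s m => plugC (decSctx s m) (decW w m)
  | .norm t m s => plugC (decSctx s m) t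

/-! ### decoded wnfs are wnfs -/

mutual
theorem wnf_decW : ∀ (w : MW) (m : Nat), IsWnf (decW w m)
  | .clos t e, m => by rw [decW_clos]; exact .lam
  | .inert i, m => by rw [decW_inert]; exact .inert (inert_decI i m)
theorem inert_decI : ∀ (i : MI) (m : Nat), IsInert (decI i m)
  | .avar n, m => by rw [decI_avar]; exact .var
  | .mapp i w, m => by rw [decI_mapp]; exact .app (inert_decI i m) (wnf_decW w m)
end

/-! ### well-formedness invariant -/

mutual
inductive K1 : List Frame → Nat → Prop
  | closF : mxE e ≤ m → K1 s m → K1 (.closF t e :: s) m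
  | argW : mxW w ≤ m → K1 s m → K1 (.argW w :: s) m
  | k3 : K3 s m → K1 s m
inductive K2 : List Frame → Nat → Prop
  | nfArg : IsNf t → K2 s m → K2 (.nfArg t :: s) m
  | k3 : K3 s m → K2 s m
inductive K3 : List Frame → Nat → Prop
  | nil : K3 [] 0
  | lamF : K3 s m → K3 (.lamF :: s) (m + 1)
  | inertF : mxI i ≤ m → K2 s m → K3 (.inertF i :: s) m
end

inductive KInv : Conf → Prop
  | eval : mxE e ≤ m → K1 s m → KInv (.eval t e s m)
  | applyW : mxW w ≤ m → K1 s m → KInv (.apply w s m)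
  | applyI : mxI i ≤ m → K2 s m → KInv (.apply (.inert i) s m)
  | normNe : IsNe t → K2 s m → KInv (.norm t m s)
  | normNf : IsNf t → K3 s m → KInv (.norm t m s)

theorem k1_notElim {s : List Frame} {m : Nat} (h : K1 s m) (hne : notElim s) : K3 s m := by
  cases h with
  | closF _ _ => exact absurd hne (by simp [notElim])
  | argW _ _ => exact absurd hne (by simp [notElim])
  | k3 h => exact h

/-! ### decoded stacks are rrCbV contexts -/

theorem rc_stack : ∀ (s : List Frame),
    (∀ m c, K3 s m → IsRc c → IsRc (compC (decSctx s m) c)) ∧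
    (∀ m c, K2 s m → IsHc c → IsRc (compC (decSctx s m) c)) ∧
    (∀ m c, K1 s m → IsFc c → IsRc (compC (decSctx s m) c)) := by
  intro s
  induction s with
  | nil =>
    refine ⟨?_, ?_, ?_⟩ <;> intro m c hk hc <;> simp [decSctx, compC]
    · exact hc
    · exact .h hc
    · exact .f hc
  | cons f s ih =>
    obtain ⟨ih3, ih2, ih1⟩ := ih
    have hassoc : ∀ (a b c : Ctx), compC (compC a b) c = compC a (compC b c) := by
      intro a b c
      induction a with
      | hole => rfl
      | appL a u iha => simp [compC, iha]
      | appR u a iha => simp [compC, iha]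
      | lamC a iha => simp [compC, iha]
    have h3 : ∀ m c, K3 (f :: s) m → IsRc c → IsRc (compC (decSctx (f :: s) m) c) := by
      intro m c hk hc
      cases hk with
      | lamF hk' =>
        rw [decSctx, hassoc]
        exact ih3 _ _ hk' (.lam (by simpa [compC] using hc))
      | inertF hi hk' =>
        rw [decSctx, hassoc]
        exact ih2 _ _ hk' (by simpa [compC] using IsHc.appR (inert_decI _ _) hc)
    have h2 : ∀ m c, K2 (f :: s) m → IsHc c → IsRc (compC (decSctx (f :: s) m) c) := by
      intro m c hk hc
      cases hk with
      | nfArg hnf hk' =>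
        rw [decSctx, hassoc]
        exact ih2 _ _ hk' (by simpa [compC] using IsHc.appL hc hnf)
      | k3 hk' => exact h3 _ _ hk' (.h hc)
    have h1 : ∀ m c, K1 (f :: s) m → IsFc c → IsRc (compC (decSctx (f :: s) m) c) := by
      intro m c hk hc
      cases hk with
      | closF _ hk' =>
        rw [decSctx, hassoc]
        exact ih1 _ _ hk' (by simpa [compC] using IsFc.appR (c := c) (t := _) hc)
      | argW _ hk' =>
        rw [decSctx, hassoc]
        exact ih1 _ _ hk' (by simpa [compC] using IsFc.appL hc (wnf_decW _ _))
      | k3 hk' => exact h3 _ _ hk' (.f hc)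
    exact ⟨h3, h2, h1⟩

/-! ### one-step preservation -/

theorem preserve : ∀ c c', Step c c' → KInv c →
    KInv c' ∧ (decC c' = decC c ∨ RedR (decC c) (decC c')) := by
  intro c c' hs hi
  cases hs with
  | @r1 t1 t2 e s m =>
    cases hi with
    | eval he hk =>
      refine ⟨.eval he (.closF he hk), Or.inl ?_⟩
      simp only [decC, decSctx, plug_comp, plugC, decT_app]
  | @r2 t e s m =>
    cases hi with
    | eval he hk =>
      refine ⟨.applyW (by simpa [mxW] using he) hk, Or.inl ?_⟩
      simp only [decC, decT_lam, decW_clos]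
  | @r3 w e s m =>
    cases hi with
    | eval he hk =>
      have hw : mxW w ≤ m := by simp [mxE] at he; exact he.1
      refine ⟨.applyW hw hk, Or.inl ?_⟩
      simp only [decC]
      rw [decT_var_some m (by omega) (show lookupEnv (.cons w e) (0 - 0) = some w from rfl)]
      rw [shift_zero]
  | @r4 n w e s m =>
    cases hi with
    | eval he hk =>
      have he' : mxE e ≤ m := by simp [mxE] at he; exact he.2
      refine ⟨.eval he' hk, Or.inl ?_⟩
      simp only [decC]
      congr 1
      cases hl : lookupEnv e (n - 0) with
      | some w' =>
        rw [decT_var_some m (by omega) hl,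
            decT_var_some m (by omega)
              (show lookupEnv (.cons w e) (n + 1 - 0) = some w' by simpa [lookupEnv] using hl)]
      | none =>
        rw [decT_var_none m (by omega) hl,
            decT_var_none m (by omega)
              (show lookupEnv (.cons w e) (n + 1 - 0) = none by simpa [lookupEnv] using hl)]
        simp [envLen]
  | @r5 w t e s m =>
    have h : mxW w ≤ m ∧ mxE e ≤ m ∧ K1 s m := by
      cases hi with
      | applyW hw hk =>
        cases hk with
        | closF he hk' => exact ⟨hw, he, hk'⟩
        | k3 h3 => cases h3
      | applyI hi2 hk =>
        cases hk with
        | k3 h3 => cases h3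
    refine ⟨.eval h.2.1 (.argW h.1 h.2.2), Or.inl ?_⟩
    simp only [decC, decSctx, plug_comp, plugC]
  | @r6 t e w s m =>
    cases hi with
    | applyW hw hk =>
      have he : mxE e ≤ m := by simpa [mxW] using hw
      obtain ⟨hw', hk'⟩ : mxW w ≤ m ∧ K1 s m := by
        cases hk with
        | argW hw' hk' => exact ⟨hw', hk'⟩
        | k3 h3 => cases h3
      refine ⟨.eval (by simp [mxE]; omega) hk', Or.inr ?_⟩
      refine ⟨decSctx s m, decT t e m 1, decW w m, ?_, wnf_decW w m, ?_, ?_⟩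
      · have := (rc_stack s).2.2 m .hole hk' .hole
        rwa [comp_hole] at this
      · simp only [decC, decSctx, plug_comp, plugC, decW_clos]
      · simp only [decC]
        rw [substDec]
  | @r7 i w s m =>
    cases hi with
    | applyW hw hk =>
      obtain ⟨hw', hk'⟩ : mxW w ≤ m ∧ K1 s m := by
        cases hk with
        | argW hw' hk' => exact ⟨hw', hk'⟩
        | k3 h3 => cases h3
      refine ⟨.applyW (by simp [mxW, mxI] at hw ⊢; omega) hk', Or.inl ?_⟩
      simp only [decC, decSctx, plug_comp, plugC, decW_inert, decI_mapp]
    | applyI hi2 hk =>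
      cases hk with
      | k3 h3 => cases h3
  | @r8 s t e m hne =>
    cases hi with
    | applyW hw hk =>
      have he : mxE e ≤ m := by simpa [mxW] using hw
      have hk3 : K3 s m := k1_notElim hk hne
      refine ⟨.eval (by simp [mxE, mxW, mxI]; omega) (.k3 (.lamF hk3)), Or.inl ?_⟩
      simp only [decC, decSctx, plug_comp, plugC, decW_clos, Nat.add_sub_cancel]
      rw [freshDec e m he t 0]
  | @r9 s i w m hne =>
    have h : mxI (.mapp i w) ≤ m ∧ K2 s m := by
      cases hi with
      | applyW hw hk => exact ⟨by simpa [mxW] using hw, .k3 (k1_notElim hk hne)⟩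
      | applyI hi2 hk => exact ⟨hi2, hk⟩
    have hi' : mxI i ≤ m := by simp [mxI] at h; omega
    have hw' : mxW w ≤ m := by have := h.1; simp [mxI] at this; omega
    refine ⟨.applyW hw' (.k3 (.inertF hi' h.2)), Or.inl ?_⟩
    simp only [decC, decSctx, plug_comp, plugC, decW_inert, decI_mapp]
  | @r10 s n m hne =>
    have h : K2 s m := by
      cases hi with
      | applyW hw hk => exact .k3 (k1_notElim hk hne)
      | applyI hi2 hk => exact hk
    refine ⟨.normNe .var h, Or.inl ?_⟩
    simp only [decC, decW_inert, decI_avar]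
  | @r11 t m i s =>
    have h : IsNf t ∧ mxI i ≤ m ∧ K2 s m := by
      cases hi with
      | normNe hne hk =>
        cases hk with
        | k3 h3 => cases h3 with
          | inertF hi2 hk' => exact ⟨.ne hne, hi2, hk'⟩
      | normNf hnf hk =>
        cases hk with
        | inertF hi2 hk' => exact ⟨hnf, hi2, hk'⟩
    refine ⟨.applyI h.2.1 (.nfArg h.1 h.2.2), Or.inl ?_⟩
    simp only [decC, decSctx, plug_comp, plugC, decW_inert]
  | @r12 t m s =>
    have h : IsNf t ∧ K3 s (m - 1) := by
      cases hi with
      | normNe hne hk =>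
        cases hk with
        | k3 h3 => cases h3 with
          | lamF hk' => exact ⟨.ne hne, by simpa using hk'⟩
      | normNf hnf hk =>
        cases hk with
        | lamF hk' => exact ⟨hnf, by simpa using hk'⟩
    refine ⟨.normNf (.lam h.1) h.2, Or.inl ?_⟩
    simp only [decC, decSctx, plug_comp, plugC]
  | @r13 a m t s =>
    have h : IsNe a ∧ IsNf t ∧ K2 s m := by
      cases hi with
      | normNe hne hk =>
        cases hk with
        | nfArg hnf hk' => exact ⟨hne, hnf, hk'⟩
        | k3 h3 => cases h3
      | normNf hnf hk => cases hk
    refine ⟨.normNe (.app h.1 h.2.1) h.2.2, Or.inl ?_⟩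
    simp only [decC, decSctx, plug_comp, plugC]
/-- if KNV reaches a final configuration ⟨N,0,•⟩_norm from the
    initial configuration of T, then N is a strong normal form and T reduces
    to N by a sequence of rrCbV steps. -/
theorem knv_final_correct (T N : Tm)
    (h : Relation.ReflTransGen Step (Conf.eval T MEnv.nil [] 0) (Conf.norm N 0 [])) :
    IsNf N ∧ Relation.ReflTransGen RedR T N := by
  have main : ∀ c, Relation.ReflTransGen Step (Conf.eval T MEnv.nil [] 0) c →
      KInv c ∧ Relation.ReflTransGen RedR T (decC c) := by
    intro c hc
    induction hc with
    | refl =>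
      refine ⟨.eval (by simp [mxE]) (.k3 .nil), ?_⟩
      simp only [decC, decSctx, plugC, decT_nil]
      exact Relation.ReflTransGen.refl
    | tail hsteps hstep ih =>
      obtain ⟨hi, hr⟩ := ih
      obtain ⟨hi', hor⟩ := preserve _ _ hstep hi
      refine ⟨hi', ?_⟩
      cases hor with
      | inl heq => rwa [heq]
      | inr hred => exact hr.tail hred
  obtain ⟨hi, hr⟩ := main _ h
  constructor
  · cases hi with
    | normNe hne _ => exact .ne hne
    | normNf hnf _ => exact hnf
  · simpa only [decC, decSctx, plugC] using hr
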